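/- Let G be a degree 3-critical graph on n ≥ 4 vertices. Then there is an ordering x₁, x₂, …, x_n of the vertices of G such that, writing d⁺(x_i) for the number of neighbours of x_i among {x_{i+1}, …, x_n}: (i) d⁺(x₁) = 3; (ii) d⁺(x_i) = 2 for all i with 2 ≤ i ≤ n−2; (iii) d⁺(x_{n−1}) = 1; and (iv) if n ≥ 7, then the degree of x_n in G is at least 4. -/

import Mathlib

/-- A finite simple graph `G` on `n` vertices is *degree 3-critical* if it has
exactly `2n − 2` edges and no proper induced subgraph of minimum degree 3:
for every nonempty vertex set `S` strictly contained in the vertex set, the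
induced subgraph `G[S]` has a vertex with at most 2 neighbours inside `S`. -/
def DegreeThreeCritical {V : Type} [Fintype V] (G : SimpleGraph V) : Prop :=
  G.edgeSet.ncard = 2 * Fintype.card V - 2 ∧
  ∀ S : Set V, S ⊂ Set.univ → S.Nonempty →
    ∃ v ∈ S, ({u | u ∈ S ∧ G.Adj v u}).ncard ≤ 2

/-- The *forward degree* of the vertex in position `i` of the ordering `x`:
the number of its neighbours among the later vertices `x_{i+1}, …, x_n`. -/
noncomputable def forwardDegree {V : Type} {n : ℕ} (G : SimpleGraph V) (x : Fin n ≃ V)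
    (i : Fin n) : ℕ :=
  ({j : Fin n | i < j ∧ G.Adj (x i) (x j)}).ncard

set_option linter.unusedSectionVars false
set_option maxHeartbeats 1000000

set_option linter.unusedSectionVars false

section Aux
variable {V : Type} [Fintype V] [DecidableEq V] (G : SimpleGraph V) [DecidableRel G.Adj]

/-- Number of neighbours of `v` inside `S`. -/
def degS (S : Finset V) (v : V) : ℕ := (S.filter (G.Adj v)).card

/-- Number of edges of `G` with both endpoints in `S`. -/
def innerE (S : Finset V) : ℕ := (G.edgeFinset.filter (fun e => ∀ x ∈ e, x ∈ S)).card

/-- Every tail of `l` starts with a vertex having at most 2 neighbours later in `l`. -/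
def AllFd2 (l : List V) : Prop := ∀ a q, (a :: q) <:+ l → degS G q.toFinset a ≤ 2

variable {G}

lemma degS_le_card (S : Finset V) (v : V) : degS G S v ≤ S.card :=
  Finset.card_le_card (Finset.filter_subset _ _)

lemma degS_erase (S : Finset V) (v : V) : degS G (S.erase v) v = degS G S v := by
  unfold degS
  congr 1
  ext u
  simp only [Finset.mem_filter, Finset.mem_erase]
  constructor
  · rintro ⟨⟨_, hu⟩, ha⟩; exact ⟨hu, ha⟩
  · rintro ⟨hu, ha⟩; exact ⟨⟨fun h => G.ne_of_adj ha h.symm, hu⟩, ha⟩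

lemma degS_mono {S T : Finset V} (h : S ⊆ T) (v : V) : degS G S v ≤ degS G T v :=
  Finset.card_le_card (Finset.filter_subset_filter _ h)

lemma degS_univ (v : V) : degS G Finset.univ v = G.degree v := by
  unfold degS
  rw [SimpleGraph.degree]
  congr 1
  ext u; simp [SimpleGraph.mem_neighborFinset]

lemma degS_insert_self (S : Finset V) (v : V) : degS G (insert v S) v = degS G S v := by
  unfold degS
  rw [Finset.filter_insert, if_neg (G.loopless.irrefl v)]

lemma innerE_split {S : Finset V} {v : V} (hv : v ∈ S) :
    innerE G S = degS G S v + innerE G (S.erase v) := by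
  classical
  unfold innerE degS
  set A := G.edgeFinset.filter (fun e => ∀ x ∈ e, x ∈ S) with hA
  have hsplit := Finset.card_filter_add_card_filter_not (s := A) (p := fun e => v ∈ e)
  have h1 : A.filter (fun e => ¬ v ∈ e) = G.edgeFinset.filter (fun e => ∀ x ∈ e, x ∈ S.erase v) := by
    rw [hA, Finset.filter_filter]
    apply Finset.filter_congr
    intro e _
    simp only [Finset.mem_erase]
    constructor
    · rintro ⟨h, hv'⟩ x hx; exact ⟨fun hxv => hv' (hxv ▸ hx), h x hx⟩
    · intro h
      exact ⟨fun x hx => (h x hx).2, fun hv' => (h v hv').1 rfl⟩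
  have h2 : A.filter (fun e => v ∈ e) = (S.filter (G.Adj v)).image (fun u => s(v, u)) := by
    ext e
    simp only [hA, Finset.mem_filter, Finset.mem_image, SimpleGraph.mem_edgeFinset]
    constructor
    · rintro ⟨⟨he, hS⟩, hve⟩
      obtain ⟨u, rfl⟩ := Sym2.mem_iff_exists.mp hve
      exact ⟨u, ⟨hS u (Sym2.mem_mk_right v u), (G.mem_edgeSet).mp he⟩, rfl⟩
    · rintro ⟨u, ⟨huS, hadj⟩, rfl⟩
      refine ⟨⟨(G.mem_edgeSet).mpr hadj, ?_⟩, Sym2.mem_mk_left v u⟩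
      intro x hx
      rcases Sym2.mem_iff.mp hx with rfl | rfl
      · exact hv
      · exact huS
  have h3 : (A.filter (fun e => v ∈ e)).card = (S.filter (G.Adj v)).card := by
    rw [h2]
    exact Finset.card_image_of_injective _ (fun a b h => Sym2.congr_right.mp h)
  rw [h1, h3] at hsplit
  omega

lemma innerE_empty : innerE G (∅ : Finset V) = 0 := by
  rw [innerE, Finset.card_eq_zero, Finset.filter_eq_empty_iff]
  intro e he h
  rw [SimpleGraph.mem_edgeFinset] at he
  induction e with
  | _ a b => exact absurd (h a (Sym2.mem_mk_left a b)) (Finset.notMem_empty a)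

lemma innerE_singleton (v : V) : innerE G {v} = 0 := by
  rw [innerE, Finset.card_eq_zero, Finset.filter_eq_empty_iff]
  intro e he h
  rw [SimpleGraph.mem_edgeFinset] at he
  induction e with
  | _ a b =>
    have ha := Finset.mem_singleton.mp (h a (Sym2.mem_mk_left a b))
    have hb := Finset.mem_singleton.mp (h b (Sym2.mem_mk_right a b))
    exact G.ne_of_adj ((G.mem_edgeSet).mp he) (ha.trans hb.symm)

lemma innerE_univ : innerE G Finset.univ = G.edgeFinset.card := by
  rw [innerE, Finset.filter_true_of_mem]
  intro e _
  exact fun x _ => Finset.mem_univ x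

section Crit

/-- Proper subsets span at most `2|S| - 3` edges. -/
lemma innerE_bound
    (hcrit : ∀ S : Finset V, S ≠ Finset.univ → S.Nonempty → ∃ v ∈ S, degS G S v ≤ 2) : ∀ S : Finset V, S ≠ Finset.univ → 2 ≤ S.card →
    innerE G S + 3 ≤ 2 * S.card := by
  intro S
  induction S using Finset.strongInductionOn with
  | _ S ih =>
    intro h1 h2
    obtain ⟨v, hv, hd⟩ := hcrit S h1 (Finset.card_pos.mp (by omega))
    have hsplit := innerE_split (G := G) hv
    have hdeg : degS G S v ≤ S.card - 1 := by
      have := degS_le_card (G := G) (S.erase v) v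
      rw [degS_erase] at this
      rw [Finset.card_erase_of_mem hv] at this
      exact this
    rcases Nat.lt_or_ge S.card 3 with h3 | h3
    · -- S.card = 2
      have hcard : S.card = 2 := by omega
      obtain ⟨u, hu⟩ := Finset.card_eq_one.mp
        (by rw [Finset.card_erase_of_mem hv, hcard])
      rw [hu, innerE_singleton] at hsplit
      omega
    · have hsub : S.erase v ⊂ S := Finset.erase_ssubset hv
      have hne : S.erase v ≠ Finset.univ := by
        intro h
        have := Finset.notMem_erase v S
        rw [h] at this
        exact this (Finset.mem_univ v)
      have := ih (S.erase v) hsub hne (by rw [Finset.card_erase_of_mem hv]; omega)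
      rw [Finset.card_erase_of_mem hv] at this
      omega

/-- Minimum degree at least 3. -/
lemma min_degree
    (hcrit : ∀ S : Finset V, S ≠ Finset.univ → S.Nonempty → ∃ v ∈ S, degS G S v ≤ 2)
    (hE : innerE G Finset.univ = 2 * Fintype.card V - 2)
    (hn4 : 4 ≤ Fintype.card V) (v : V) : 3 ≤ G.degree v := by
  have hsplit := innerE_split (G := G) (Finset.mem_univ v)
  rw [degS_univ] at hsplit
  have hne : Finset.univ.erase v ≠ Finset.univ := by
    intro h
    have := Finset.notMem_erase v (Finset.univ : Finset V)
    rw [h] at this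
    exact this (Finset.mem_univ v)
  have hcard : (Finset.univ.erase v).card = Fintype.card V - 1 := by
    rw [Finset.card_erase_of_mem (Finset.mem_univ v), Finset.card_univ]
  have hb := innerE_bound hcrit (Finset.univ.erase v) hne (by omega)
  rw [hcard] at hb
  omega

/-- Key lemma: a proper subset in which all vertices except `w` are "small"
cannot have all non-`w` vertices of inner degree at least 3. -/
lemma dense_contradiction
    (hcrit : ∀ S : Finset V, S ≠ Finset.univ → S.Nonempty → ∃ v ∈ S, degS G S v ≤ 2)
    (hE : innerE G Finset.univ = 2 * Fintype.card V - 2)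
    (hn4 : 4 ≤ Fintype.card V)
    (S : Finset V) (h1 : S ≠ Finset.univ) (h2 : 2 ≤ S.card)
    (w : V) (hw : w ∈ S)
    (hsmall : ∀ v ∈ S.erase w, G.degree v ≤ 3)
    (hdense : ∀ v ∈ S.erase w, 3 ≤ degS G S v) : False := by
  classical
  -- neighbours of non-w vertices of S stay in S
  have hnb : ∀ v ∈ S.erase w, ∀ u, G.Adj v u → u ∈ S := by
    intro v hv u hadj
    have h3 := hdense v hv
    have h4 := hsmall v hv
    have hdu : degS G Finset.univ v = G.degree v := degS_univ v
    have hsub : S.filter (G.Adj v) ⊆ Finset.univ.filter (G.Adj v) :=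
      Finset.filter_subset_filter _ (Finset.subset_univ S)
    have hcardle : (Finset.univ.filter (G.Adj v)).card ≤ (S.filter (G.Adj v)).card := by
      unfold degS at h3 hdu
      omega
    have heq := Finset.eq_of_subset_of_card_le hsub hcardle
    have : u ∈ Finset.univ.filter (G.Adj v) := Finset.mem_filter.mpr ⟨Finset.mem_univ u, hadj⟩
    rw [← heq] at this
    exact (Finset.mem_filter.mp this).1
  set T : Finset V := Sᶜ ∪ {w} with hT
  have hwT : w ∈ T := by simp [hT]
  -- every edge lies within S or within T
  have hcover : G.edgeFinset ⊆
      (G.edgeFinset.filter (fun e => ∀ x ∈ e, x ∈ S)) ∪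
      (G.edgeFinset.filter (fun e => ∀ x ∈ e, x ∈ T)) := by
    intro e he
    induction e with
    | _ a b =>
      have hadj : G.Adj a b := (G.mem_edgeSet).mp (SimpleGraph.mem_edgeFinset.mp he)
      rcases Decidable.em (a ∈ S.erase w) with ha | ha
      · refine Finset.mem_union_left _ (Finset.mem_filter.mpr ⟨he, ?_⟩)
        intro x hx
        rcases Sym2.mem_iff.mp hx with rfl | rfl
        · exact Finset.mem_of_mem_erase ha
        · exact hnb a ha x hadj
      · rcases Decidable.em (b ∈ S.erase w) with hb | hb
        · refine Finset.mem_union_left _ (Finset.mem_filter.mpr ⟨he, ?_⟩)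
          intro x hx
          rcases Sym2.mem_iff.mp hx with rfl | rfl
          · exact hnb b hb x hadj.symm
          · exact Finset.mem_of_mem_erase hb
        · refine Finset.mem_union_right _ (Finset.mem_filter.mpr ⟨he, ?_⟩)
          intro x hx
          have key : ∀ y, ¬ y ∈ S.erase w → y ∈ T := by
            intro y hy
            rcases Decidable.em (y = w) with rfl | hyw
            · exact hwT
            · simp only [hT, Finset.mem_union, Finset.mem_compl, Finset.mem_singleton]
              left
              intro hyS
              exact hy (Finset.mem_erase.mpr ⟨hyw, hyS⟩)
          rcases Sym2.mem_iff.mp hx with rfl | rfl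
          · exact key x ha
          · exact key x hb
  have hEcard : G.edgeFinset.card ≤ innerE G S + innerE G T := by
    calc G.edgeFinset.card ≤ _ := Finset.card_le_card hcover
    _ ≤ _ := Finset.card_union_le _ _
  -- T is a proper subset of card n - |S| + 1 ≥ 2
  have hScard : S.card < Fintype.card V := by
    rw [← Finset.card_univ]
    exact Finset.card_lt_card (Finset.ssubset_univ_iff.mpr h1)
  have hTcard : T.card = Fintype.card V - S.card + 1 := by
    rw [hT, Finset.card_union_of_disjoint (by
      simp only [Finset.disjoint_singleton_right, Finset.mem_compl]
      exact fun h => h hw)]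
    rw [Finset.card_compl, Finset.card_singleton]
  obtain ⟨v, hv⟩ : (S.erase w).Nonempty := by
    rw [← Finset.card_pos, Finset.card_erase_of_mem hw]; omega
  have hTne : T ≠ Finset.univ := by
    intro h
    have hvT : v ∈ T := h ▸ Finset.mem_univ v
    simp only [hT, Finset.mem_union, Finset.mem_compl, Finset.mem_singleton] at hvT
    rcases hvT with h' | h'
    · exact h' (Finset.mem_of_mem_erase hv)
    · exact (Finset.mem_erase.mp hv).1 h'
  have hb1 := innerE_bound hcrit S h1 h2
  have hb2 := innerE_bound hcrit T hTne (by omega)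
  have hEn : G.edgeFinset.card = 2 * Fintype.card V - 2 := by
    rw [← innerE_univ]; exact hE
  rw [hTcard] at hb2
  omega


lemma erase_ne_univ {S : Finset V} {v : V} (hv : v ∈ S) (h1 : S ≠ Finset.univ) :
    S.erase v ≠ Finset.univ := by
  intro h
  have := Finset.notMem_erase v S
  rw [h] at this
  exact this (Finset.mem_univ v)

lemma allFd2_singleton (v : V) : AllFd2 G [v] := by
  intro a q hsuf
  rcases List.suffix_cons_iff.mp hsuf with h | h
  · cases h
    simp [degS]
  · exact absurd (List.IsSuffix.length_le h) (by simp)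

lemma allFd2_cons {v : V} {l : List V} (h1 : AllFd2 G l) (h2 : degS G l.toFinset v ≤ 2) :
    AllFd2 G (v :: l) := by
  intro a q hsuf
  rcases List.suffix_cons_iff.mp hsuf with h | h
  · injection h with ha hq
    subst ha; subst hq
    exact h2
  · exact h1 a q h

/-- Peel an arbitrary proper subset. -/
lemma rec0 (hcrit : ∀ S : Finset V, S ≠ Finset.univ → S.Nonempty → ∃ v ∈ S, degS G S v ≤ 2) :
    ∀ S : Finset V, S ≠ Finset.univ → S.Nonempty →
    ∃ l : List V, l.Nodup ∧ l.toFinset = S ∧ AllFd2 G l := by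
  intro S
  induction S using Finset.strongInductionOn with
  | _ S ih =>
    intro h1 h2
    obtain ⟨v, hv, hd⟩ := hcrit S h1 h2
    rcases Finset.eq_empty_or_nonempty (S.erase v) with he | he
    · refine ⟨[v], List.nodup_singleton v, ?_, allFd2_singleton v⟩
      simp only [List.toFinset_cons, List.toFinset_nil, insert_empty_eq]
      have := Finset.insert_erase hv
      rw [he] at this
      simpa using this
    · obtain ⟨l, hnd, hfin, hall⟩ := ih (S.erase v) (Finset.erase_ssubset hv)
        (erase_ne_univ hv h1) he
      refine ⟨v :: l, ?_, ?_, ?_⟩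
      · exact List.nodup_cons.mpr ⟨by rw [← List.mem_toFinset, hfin]; exact Finset.notMem_erase v S, hnd⟩
      · rw [List.toFinset_cons, hfin, Finset.insert_erase hv]
      · exact allFd2_cons hall (by rw [hfin, degS_erase]; exact hd)

/-- Peel a proper subset containing a high-degree vertex, ending at a
high-degree vertex. -/
lemma rec1 (hcrit : ∀ S : Finset V, S ≠ Finset.univ → S.Nonempty → ∃ v ∈ S, degS G S v ≤ 2)
    (hE : innerE G Finset.univ = 2 * Fintype.card V - 2) (hn4 : 4 ≤ Fintype.card V) :
    ∀ S : Finset V, S ≠ Finset.univ → ∀ b ∈ S, 4 ≤ G.degree b →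
    ∃ l : List V, l.Nodup ∧ l.toFinset = S ∧ AllFd2 G l ∧
      ∃ b', 4 ≤ G.degree b' ∧ l.getLast? = some b' := by
  intro S
  induction S using Finset.strongInductionOn with
  | _ S ih =>
    intro h1 b hb hbig
    rcases Finset.eq_empty_or_nonempty (S.erase b) with hSb | hSb
    · -- S = {b}
      have hS : S = {b} := by
        have := Finset.insert_erase hb
        rw [hSb] at this
        simpa using this.symm
      exact ⟨[b], List.nodup_singleton b, by simp [hS], allFd2_singleton b,
        b, hbig, rfl⟩
    · by_cases hex : ∃ v ∈ S, degS G S v ≤ 2 ∧ ∃ b' ∈ S.erase v, 4 ≤ G.degree b'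
      · obtain ⟨v, hv, hdeg, b', hb', hbig'⟩ := hex
        obtain ⟨l, hnd, hfin, hall, c, hcbig, hclast⟩ := ih (S.erase v)
          (Finset.erase_ssubset hv) (erase_ne_univ hv h1) b' hb' hbig'
        have hlne : l ≠ [] := by
          intro h
          rw [h] at hclast
          exact absurd hclast (by simp)
        refine ⟨v :: l, ?_, ?_, ?_, c, hcbig, ?_⟩
        · exact List.nodup_cons.mpr ⟨by rw [← List.mem_toFinset, hfin]; exact Finset.notMem_erase v S, hnd⟩
        · rw [List.toFinset_cons, hfin, Finset.insert_erase hv]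
        · exact allFd2_cons hall (by rw [hfin, degS_erase]; exact hdeg)
        · cases l with
          | nil => exact absurd rfl hlne
          | cons c' t => rw [List.getLast?_cons_cons]; exact hclast
      · push_neg at hex
        exfalso
        obtain ⟨v₀, hv₀, hd₀⟩ := hcrit S h1 ⟨b, hb⟩
        -- all high-degree vertices of S equal v₀
        have hsmall : ∀ u ∈ S.erase v₀, G.degree u ≤ 3 := by
          intro u hu
          have := hex v₀ hv₀ hd₀ u hu
          omega
        have hbv : b = v₀ := by
          by_contra hne
          have := hsmall b (Finset.mem_erase.mpr ⟨hne, hb⟩)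
          omega
        subst hbv
        have hdense : ∀ u ∈ S.erase b, 3 ≤ degS G S u := by
          intro u hu
          by_contra hlt
          have hu' : u ∈ S := Finset.mem_of_mem_erase hu
          have := hex u hu' (by omega) b
            (Finset.mem_erase.mpr ⟨fun h => (Finset.mem_erase.mp hu).1 h.symm, hb⟩)
          omega
        have h2 : 2 ≤ S.card := by
          have h3 := Finset.card_erase_of_mem hb
          have h4 := Finset.card_pos.mpr hSb
          omega
        exact dense_contradiction hcrit hE hn4 S h1 h2 b hb hsmall hdense
end Crit


lemma fdSum_eq (d : V) : ∀ (l : List V), l.Nodup →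
    innerE G l.toFinset =
      ∑ i ∈ Finset.range l.length, degS G ((l.drop (i+1)).toFinset) (l.getD i d) := by
  intro l
  induction l with
  | nil => simp [innerE_empty]
  | cons a t iht =>
    intro hnd
    obtain ⟨hat, hndt⟩ := List.nodup_cons.mp hnd
    have hsplit : innerE G (a :: t).toFinset
        = degS G t.toFinset a + innerE G t.toFinset := by
      rw [List.toFinset_cons, innerE_split (Finset.mem_insert_self a t.toFinset),
        degS_insert_self, Finset.erase_insert (by rwa [List.mem_toFinset])]
    rw [hsplit, iht hndt]
    rw [List.length_cons, Finset.sum_range_succ']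
    simp only [List.drop_succ_cons, List.getD_cons_succ, List.getD_cons_zero, List.drop_zero]
    omega

lemma getElem_congr' {α : Type*} (l : List α) {i j : ℕ} (h : i = j) (hi : i < l.length) :
    l[i]'hi = l[j]'(h ▸ hi) := by subst h; rfl

lemma forwardDegree_eq {n : ℕ} (L : List V) (hlen : L.length = n) (d : V)
    (x : Fin n ≃ V) (hx : ∀ i : Fin n, x i = L.getD (i : ℕ) d) (i : Fin n) :
    forwardDegree G x i = degS G ((L.drop ((i:ℕ)+1)).toFinset) (L.getD (i:ℕ) d) := by
  classical
  have hset : {j : Fin n | i < j ∧ G.Adj (x i) (x j)}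
      = ↑(Finset.univ.filter fun j => i < j ∧ G.Adj (x i) (x j)) := by
    ext j; simp
  rw [forwardDegree, hset, Set.ncard_coe_finset, degS, ← hx i]
  apply Finset.card_bij (fun j _ => x j)
  · intro j hj
    rw [Finset.mem_filter] at hj
    obtain ⟨-, hij, hadj⟩ := hj
    rw [Finset.mem_filter, List.mem_toFinset]
    refine ⟨?_, hadj⟩
    have hjlt : (j : ℕ) < L.length := hlen ▸ j.isLt
    have hik : (i:ℕ) + 1 ≤ (j:ℕ) := hij
    rw [hx j, List.getD_eq_getElem L d hjlt, List.mem_iff_getElem]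
    refine ⟨(j:ℕ) - ((i:ℕ)+1), by rw [List.length_drop]; omega, ?_⟩
    rw [List.getElem_drop]
    exact getElem_congr' L (by omega) _
  · intro j₁ h₁ j₂ h₂ h
    exact x.injective h
  · intro u hu
    rw [Finset.mem_filter, List.mem_toFinset, List.mem_iff_getElem] at hu
    obtain ⟨⟨m, hm, hmu⟩, hadj⟩ := hu
    rw [List.getElem_drop] at hmu
    have hmn : (i:ℕ) + 1 + m < n := by
      rw [List.length_drop] at hm
      omega
    refine ⟨⟨(i:ℕ)+1+m, hmn⟩, Finset.mem_filter.mpr ⟨Finset.mem_univ _, ?_, ?_⟩, ?_⟩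
    · show i < (⟨(i:ℕ)+1+m, hmn⟩ : Fin n)
      rw [Fin.lt_def]
      simp only []
      omega
    · rw [hx ⟨(i:ℕ)+1+m, hmn⟩]
      simp only []
      rw [List.getD_eq_getElem L d (by omega), hmu]
      exact hadj
    · rw [hx ⟨(i:ℕ)+1+m, hmn⟩]
      simp only []
      rw [List.getD_eq_getElem L d (by omega), hmu]

lemma gsum (n : ℕ) (hn : 4 ≤ n) :
    ∑ i ∈ Finset.range n,
      (if i = 0 then 3 else if i ≤ n-3 then 2 else if i = n-2 then 1 else 0) = 2*n-2 := by
  obtain ⟨m, rfl⟩ : ∃ m, n = m + 2 := ⟨n - 2, by omega⟩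
  have hm : 2 ≤ m := by omega
  rw [Finset.sum_range_succ, Finset.sum_range_succ]
  have h1 : (if m = 0 then 3 else if m ≤ m+2-3 then 2 else if m = m+2-2 then 1 else 0) = 1 := by
    rw [if_neg (by omega), if_neg (by omega), if_pos (by omega)]
  have h2 : (if m+1 = 0 then 3 else if m+1 ≤ m+2-3 then 2 else if m+1 = m+2-2 then 1 else 0) = 0 := by
    rw [if_neg (by omega), if_neg (by omega), if_neg (by omega)]
  rw [h1, h2]
  have h3 : ∀ i ∈ Finset.range m,
      (if i = 0 then 3 else if i ≤ m+2-3 then 2 else if i = m+2-2 then 1 else 0)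
      = 2 + (if i = 0 then 1 else 0) := by
    intro i hi
    have hi' := Finset.mem_range.mp hi
    rcases Nat.eq_zero_or_pos i with rfl | hpos
    · simp
    · rw [if_neg (by omega), if_pos (by omega), if_neg (by omega)]
  rw [Finset.sum_congr rfl h3, Finset.sum_add_distrib, Finset.sum_const, Finset.card_range,
    Finset.sum_ite_eq' (Finset.range m) 0 (fun _ => 1), if_pos (Finset.mem_range.mpr (by omega))]
  simp [smul_eq_mul]
  omega

end Aux


/-- Every degree 3-critical graph `G` on `n ≥ 4` vertices has
an ordering `x₁, …, x_n` of its vertices (here indexed by `Fin n`, so position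
`i` of the paper corresponds to index `i - 1`) such that: (i) the first vertex
has forward degree 3; (ii) the vertices in positions `2, …, n−2` have forward
degree 2; (iii) the vertex in position `n−1` has forward degree 1; and (iv) if
`n ≥ 7`, the last vertex has degree at least 4 in `G`. -/
theorem degree_three_critical_ordering {V : Type} [Fintype V]
    (G : SimpleGraph V) (hn : 4 ≤ Fintype.card V)
    (hG : DegreeThreeCritical G) :
    ∃ x : Fin (Fintype.card V) ≃ V,
      (∀ i : Fin (Fintype.card V), (i : ℕ) = 0 → forwardDegree G x i = 3) ∧
      (∀ i : Fin (Fintype.card V), 1 ≤ (i : ℕ) → (i : ℕ) ≤ Fintype.card V - 3 →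
        forwardDegree G x i = 2) ∧
      (∀ i : Fin (Fintype.card V), (i : ℕ) = Fintype.card V - 2 →
        forwardDegree G x i = 1) ∧
      (7 ≤ Fintype.card V →
        ∀ i : Fin (Fintype.card V), (i : ℕ) = Fintype.card V - 1 →
          4 ≤ (G.neighborSet (x i)).ncard) := by
  classical
  letI : DecidableEq V := Classical.decEq V
  letI : DecidableRel G.Adj := Classical.decRel _
  obtain ⟨hEcard, hcrit0⟩ := hG
  have hcrit : ∀ S : Finset V, S ≠ Finset.univ → S.Nonempty → ∃ v ∈ S, degS G S v ≤ 2 := by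
    intro S hS hne
    obtain ⟨v, hv, hle⟩ := hcrit0 ↑S
      (by
        rw [Set.ssubset_univ_iff]
        intro h
        apply hS
        apply Finset.coe_injective
        rw [h, Finset.coe_univ])
      (Finset.coe_nonempty.mpr hne)
    refine ⟨v, hv, ?_⟩
    have hs : {u | u ∈ (↑S : Set V) ∧ G.Adj v u} = ↑(S.filter (G.Adj v)) := by
      ext u; simp
    rw [hs, Set.ncard_coe_finset] at hle
    exact hle
  have hE : innerE G Finset.univ = 2 * Fintype.card V - 2 := by
    rw [innerE_univ, ← hEcard]
    simp [Set.ncard_eq_toFinset_card', SimpleGraph.edgeFinset]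
  have hdegsum : ∑ v : V, G.degree v = 2 * (2 * Fintype.card V - 2) := by
    rw [SimpleGraph.sum_degrees_eq_twice_card_edges, ← innerE_univ, hE]
  have hmin : ∀ v, 3 ≤ G.degree v := min_degree hcrit hE hn
  have hsmallex : ∃ v₀, G.degree v₀ = 3 := by
    by_contra h
    push_neg at h
    have h4 : ∀ v : V, 4 ≤ G.degree v := fun v => by
      have h1 := hmin v; have h2 := h v; omega
    have h5 : Finset.univ.card • 4 ≤ ∑ v : V, G.degree v :=
      Finset.card_nsmul_le_sum _ _ _ (fun v _ => h4 v)
    rw [Finset.card_univ, smul_eq_mul] at h5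
    omega
  obtain ⟨v₀, hv₀3⟩ := hsmallex
  have herne : Finset.univ.erase v₀ ≠ Finset.univ := by
    intro h
    have := Finset.notMem_erase v₀ (Finset.univ : Finset V)
    rw [h] at this
    exact this (Finset.mem_univ v₀)
  have hkey : ∃ l : List V, l.Nodup ∧ l.toFinset = Finset.univ.erase v₀ ∧ AllFd2 G l ∧
      (7 ≤ Fintype.card V → ∃ b', 4 ≤ G.degree b' ∧ l.getLast? = some b') := by
    by_cases h7 : 7 ≤ Fintype.card V
    · have hbigex : ∃ b, 4 ≤ G.degree b := by
        by_contra h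
        push_neg at h
        have h5 : ∑ v : V, G.degree v ≤ Finset.univ.card • 3 :=
          Finset.sum_le_card_nsmul _ _ 3 (fun v _ => by have := h v; omega)
        rw [Finset.card_univ, smul_eq_mul] at h5
        omega
      obtain ⟨b, hbig⟩ := hbigex
      have hbne : b ∈ Finset.univ.erase v₀ := Finset.mem_erase.mpr
        ⟨by intro h; rw [h, hv₀3] at hbig; omega, Finset.mem_univ b⟩
      obtain ⟨l, h1, h2, h3, b', hb1, hb2⟩ := rec1 hcrit hE hn _ herne b hbne hbig
      exact ⟨l, h1, h2, h3, fun _ => ⟨b', hb1, hb2⟩⟩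
    · have hne : (Finset.univ.erase v₀).Nonempty := by
        rw [← Finset.card_pos, Finset.card_erase_of_mem (Finset.mem_univ v₀), Finset.card_univ]
        omega
      obtain ⟨l, h1, h2, h3⟩ := rec0 hcrit _ herne hne
      exact ⟨l, h1, h2, h3, fun h => absurd h h7⟩
  obtain ⟨l, hndl, hfinl, hall, hlast⟩ := hkey
  set L := v₀ :: l with hL
  have hv₀nl : v₀ ∉ l := by
    rw [← List.mem_toFinset, hfinl]
    exact Finset.notMem_erase _ _
  have hnd : L.Nodup := List.nodup_cons.mpr ⟨hv₀nl, hndl⟩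
  have hfin : L.toFinset = Finset.univ := by
    rw [hL, List.toFinset_cons, hfinl, Finset.insert_erase (Finset.mem_univ v₀)]
  have hlen : L.length = Fintype.card V := by
    rw [← List.toFinset_card_of_nodup hnd, hfin, Finset.card_univ]
  have hinj : Function.Injective (fun i : Fin (Fintype.card V) => L.getD (i:ℕ) v₀) := by
    intro a b h
    simp only at h
    rw [List.getD_eq_getElem L v₀ (by omega), List.getD_eq_getElem L v₀ (by omega)] at h
    have := (List.Nodup.getElem_inj_iff hnd).mp h
    exact Fin.ext this
  have hbij := (Fintype.bijective_iff_injective_and_card _).mpr ⟨hinj, by simp⟩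
  set x : Fin (Fintype.card V) ≃ V := Equiv.ofBijective _ hbij with hxdef
  have hx : ∀ i : Fin (Fintype.card V), x i = L.getD (i:ℕ) v₀ := fun i => rfl
  set F : ℕ → ℕ := fun i => degS G ((L.drop (i+1)).toFinset) (L.getD i v₀) with hFdef
  have hFD : ∀ i : Fin (Fintype.card V), forwardDegree G x i = F (i:ℕ) :=
    fun i => forwardDegree_eq L hlen v₀ x hx i
  have hF0 : F 0 = 3 := by
    show degS G ((L.drop 1).toFinset) (L.getD 0 v₀) = 3
    rw [hL]
    simp only [List.drop_succ_cons, List.drop_zero, List.getD_cons_zero]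
    rw [hfinl, degS_erase, degS_univ, hv₀3]
  have hFmid : ∀ i, 1 ≤ i → i < Fintype.card V → F i ≤ 2 := by
    intro i h1 h2
    have hiL : i < L.length := by omega
    have hgd : L.getD i v₀ = L[i] := List.getD_eq_getElem _ _ hiL
    have hsuffix : (L[i] :: L.drop (i+1)) <:+ l := by
      have hdropeq : L.drop i = L[i] :: L.drop (i+1) := List.drop_eq_getElem_cons hiL
      have hstep : L.drop i = l.drop (i-1) := by
        rw [hL]
        obtain ⟨m, rfl⟩ : ∃ m, i = m+1 := ⟨i-1, by omega⟩
        rw [List.drop_succ_cons]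
        norm_num
      rw [← hdropeq, hstep]
      exact List.drop_suffix _ _
    have := hall L[i] (L.drop (i+1)) hsuffix
    show degS G ((L.drop (i+1)).toFinset) (L.getD i v₀) ≤ 2
    rw [hgd]
    exact this
  have hFtop : F (Fintype.card V - 2) ≤ 1 := by
    have hb1 : F (Fintype.card V - 2) ≤ ((L.drop (Fintype.card V - 2 + 1)).toFinset).card :=
      degS_le_card _ _
    have hb2 : ((L.drop (Fintype.card V - 2 + 1)).toFinset).card
        ≤ (L.drop (Fintype.card V - 2 + 1)).length := List.toFinset_card_le _
    rw [List.length_drop, hlen] at hb2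
    omega
  have hFlast : F (Fintype.card V - 1) = 0 := by
    show degS G ((L.drop (Fintype.card V - 1 + 1)).toFinset) _ = 0
    have hnil : L.drop (Fintype.card V - 1 + 1) = [] := List.drop_eq_nil_of_le (by omega)
    rw [hnil]
    simp [degS]
  have hsum : ∑ i ∈ Finset.range (Fintype.card V), F i = 2 * Fintype.card V - 2 := by
    have hfs := fdSum_eq (G := G) v₀ L hnd
    rw [hfin, hE, hlen] at hfs
    exact hfs.symm
  set g : ℕ → ℕ := fun i => if i = 0 then 3 else if i ≤ Fintype.card V - 3 then 2
    else if i = Fintype.card V - 2 then 1 else 0 with hgdef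
  have hle : ∀ i ∈ Finset.range (Fintype.card V), F i ≤ g i := by
    intro i hi
    have hi' := Finset.mem_range.mp hi
    show F i ≤ if i = 0 then 3 else if i ≤ Fintype.card V - 3 then 2
      else if i = Fintype.card V - 2 then 1 else 0
    rcases Nat.eq_zero_or_pos i with rfl | hpos
    · rw [if_pos rfl, hF0]
    · rw [if_neg (by omega)]
      rcases Nat.lt_or_ge i (Fintype.card V - 2) with hcase | hcase
      · rw [if_pos (by omega)]
        exact hFmid i hpos hi'
      · rcases Nat.eq_or_lt_of_le hcase with heq2 | hlt2
        · rw [if_neg (by omega), if_pos heq2.symm, ← heq2]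
          exact hFtop
        · have : i = Fintype.card V - 1 := by omega
          rw [if_neg (by omega), if_neg (by omega), this, hFlast]
  have hgs : ∑ i ∈ Finset.range (Fintype.card V), g i = 2 * Fintype.card V - 2 :=
    gsum (Fintype.card V) hn
  have heq : ∀ i ∈ Finset.range (Fintype.card V), F i = g i :=
    (Finset.sum_eq_sum_iff_of_le hle).mp (hsum.trans hgs.symm)
  refine ⟨x, ?_, ?_, ?_, ?_⟩
  · intro i hi
    rw [hFD i, hi, hF0]
  · intro i h1 h2
    rw [hFD i]
    have hg := heq (i:ℕ) (Finset.mem_range.mpr i.isLt)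
    rw [hg]
    show (if (i:ℕ) = 0 then 3 else if (i:ℕ) ≤ Fintype.card V - 3 then 2
      else if (i:ℕ) = Fintype.card V - 2 then 1 else 0) = 2
    rw [if_neg (by omega), if_pos h2]
  · intro i hi
    rw [hFD i]
    have hg := heq (i:ℕ) (Finset.mem_range.mpr i.isLt)
    rw [hg, hi]
    show (if Fintype.card V - 2 = 0 then 3 else if Fintype.card V - 2 ≤ Fintype.card V - 3 then 2
      else if Fintype.card V - 2 = Fintype.card V - 2 then 1 else 0) = 1
    rw [if_neg (by omega), if_neg (by omega), if_pos rfl]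
  · intro h7 i hi
    obtain ⟨b', hbig, hlq⟩ := hlast h7
    have hxi : x i = b' := by
      rw [hx i]
      have hiL : (i:ℕ) < L.length := by omega
      rw [List.getD_eq_getElem L v₀ hiL]
      have hLlast : L.getLast? = some b' := by
        cases l with
        | nil => rw [List.getLast?_nil] at hlq; exact absurd hlq (by simp)
        | cons c t => rw [hL, List.getLast?_cons_cons]; exact hlq
      rw [List.getLast?_eq_getElem?, List.getElem?_eq_getElem (by omega)] at hLlast
      have hidx : (i:ℕ) = L.length - 1 := by omega
      rw [getElem_congr' L hidx hiL]
      exact Option.some_injective _ hLlast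
    rw [hxi]
    have hncard : (G.neighborSet b').ncard = G.degree b' := by
      rw [Set.ncard_eq_toFinset_card', Set.toFinset_card]
      exact SimpleGraph.card_neighborSet_eq_degree G b'
    rw [hncard]
    exact hbig
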